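/- The orthogonality relation Σ_{k=j}^{n} w_{m,r}[n,k]_q · W_{m,r}[k,j]_q = δ_{nj} holds for all integers n ≥ j ≥ 0, where δ_{nj} = 1 if n = j and δ_{nj} = 0 otherwise. -/

import Mathlib

open Finset

/-- The `q`-integer `[s]_q = (q^s - 1)/(q - 1)` for an integer `s`. -/
noncomputable def qint (q : ℝ) (s : ℤ) : ℝ := (q ^ s - 1) / (q - 1)

/-- The `(q,r)`-Whitney numbers of the second kind `W_{m,r}[n,k]_q`, with `r : ℤ` so
that both `W_{m,r}` and `W_{m,-r}` are covered: `W[0,0] = 1`, `W[n,k] = 0` for `k > n`,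
and `W[n,k] = q^(m(k-1)+r) W[n-1,k-1] + [mk+r]_q W[n-1,k]`. -/
noncomputable def qWhitney2 (q : ℝ) (m : ℕ) (r : ℤ) : ℕ → ℕ → ℝ
  | 0, 0 => 1
  | 0, _ + 1 => 0
  | n + 1, 0 => qint q r * qWhitney2 q m r n 0
  | n + 1, k + 1 =>
      q ^ (m * k + r) * qWhitney2 q m r n k
        + qint q (m * (k + 1) + r) * qWhitney2 q m r n (k + 1)

lemma qWhitney2_eq_zero (q : ℝ) (m : ℕ) (r : ℤ) :
    ∀ n k, n < k → qWhitney2 q m r n k = 0 := by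
  intro n
  induction n with
  | zero =>
    intro k hk
    match k, hk with
    | k+1, _ => rfl
  | succ n ih =>
    intro k hk
    match k, hk with
    | k+1, hk =>
      have h1 : n < k := by omega
      have h2 : n < k+1 := by omega
      simp [qWhitney2, ih k h1, ih (k+1) h2]

lemma phi_succ (q : ℝ) (hq : 0 < q) (r : ℤ) (m : ℕ) (j : ℕ) (x : ℝ) :
    x * (∏ i ∈ range j, (q ^ (-(r + i * m)) * (x - qint q (r + i * m)))) =
      qint q (m * j + r) * (∏ i ∈ range j, (q ^ (-(r + i * m)) * (x - qint q (r + i * m)))) +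
      q ^ ((m : ℤ) * j + r) * (∏ i ∈ range (j+1), (q ^ (-(r + i * m)) * (x - qint q (r + i * m)))) := by
  rw [prod_range_succ]
  have hne : q ≠ 0 := ne_of_gt hq
  have key : q ^ ((m : ℤ) * j + r) * (q ^ (-(r + (j:ℤ) * m))) = 1 := by
    rw [← zpow_add₀ hne]
    ring_nf
    exact zpow_zero q
  calc x * ∏ i ∈ range j, (q ^ (-(r + i * m)) * (x - qint q (r + i * m)))
      = qint q (m * j + r) * (∏ i ∈ range j, (q ^ (-(r + i * m)) * (x - qint q (r + i * m))))
        + (x - qint q (r + (j:ℤ) * m)) * (∏ i ∈ range j, (q ^ (-(r + i * m)) * (x - qint q (r + i * m)))) := by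
        have : (m:ℤ) * j + r = r + (j:ℤ) * m := by ring
        rw [this]; ring
    _ = _ := by
        rw [← mul_assoc, mul_comm (q ^ ((m : ℤ) * j + r)) _, mul_assoc, ← mul_assoc (q^((m:ℤ)*j+r)), key]
        ring

noncomputable def phi (q : ℝ) (m : ℕ) (r : ℤ) (j : ℕ) (x : ℝ) : ℝ :=
  ∏ i ∈ range j, (q ^ (-(r + i * m)) * (x - qint q (r + i * m)))

lemma phi_succ' (q : ℝ) (hq : 0 < q) (r : ℤ) (m : ℕ) (j : ℕ) (x : ℝ) :
    x * phi q m r j x =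
      qint q (m * j + r) * phi q m r j x + q ^ ((m : ℤ) * j + r) * phi q m r (j+1) x :=
  phi_succ q hq r m j x

lemma expand (q : ℝ) (hq : 0 < q) (m : ℕ) (r : ℤ) (N : ℕ) (x : ℝ) :
    x ^ N = ∑ j ∈ range (N+1), qWhitney2 q m r N j * phi q m r j x := by
  induction N with
  | zero => simp [qWhitney2, phi]
  | succ N ih =>
    have h1 : x ^ (N+1) = ∑ j ∈ range (N+1), qWhitney2 q m r N j * (x * phi q m r j x) := by
      rw [pow_succ, ih, sum_mul]
      exact sum_congr rfl fun j _ => by ring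
    rw [h1]
    have step : ∀ j ∈ range (N+1), qWhitney2 q m r N j * (x * phi q m r j x) =
        qWhitney2 q m r N j * qint q (m*j+r) * phi q m r j x
        + qWhitney2 q m r N j * q ^ ((m:ℤ)*j+r) * phi q m r (j+1) x := by
      intro j _
      rw [phi_succ' q hq r m j x]
      ring
    rw [sum_congr rfl step, sum_add_distrib]
    rw [sum_range_succ' (fun j => qWhitney2 q m r (N+1) j * phi q m r j x) (N+1)]
    have hW0 : qWhitney2 q m r (N+1) 0 = qint q r * qWhitney2 q m r N 0 := rfl
    have hWs : ∀ j, qWhitney2 q m r (N+1) (j+1) =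
        q ^ ((m:ℤ)*j + r) * qWhitney2 q m r N j
          + qint q (m*(j+1)+r) * qWhitney2 q m r N (j+1) := by
      intro j
      show q ^ ((m*j : ℕ) + r) * _ + qint q ((m*(j+1) : ℕ) + r) * _ = _
      push_cast
      ring_nf
    have hRHS : ∑ j ∈ range (N+1), qWhitney2 q m r (N+1) (j+1) * phi q m r (j+1) x =
        (∑ j ∈ range (N+1), qWhitney2 q m r N j * q ^ ((m:ℤ)*j+r) * phi q m r (j+1) x)
        + ∑ j ∈ range (N+1), qint q (m*(j+1)+r) * qWhitney2 q m r N (j+1) * phi q m r (j+1) x := by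
      rw [← sum_add_distrib]
      exact sum_congr rfl fun j _ => by rw [hWs j]; ring
    rw [hRHS, hW0]
    have hL : ∑ j ∈ range (N+1), qWhitney2 q m r N j * qint q (m*j+r) * phi q m r j x =
        (∑ j ∈ range N, qWhitney2 q m r N (j+1) * qint q (m*(j+1)+r) * phi q m r (j+1) x)
          + qWhitney2 q m r N 0 * qint q r * phi q m r 0 x := by
      rw [sum_range_succ' (fun j => qWhitney2 q m r N j * qint q (m*j+r) * phi q m r j x) N]
      norm_num
    have hR : ∑ j ∈ range (N+1), qint q (m*(j+1)+r) * qWhitney2 q m r N (j+1) * phi q m r (j+1) x =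
        ∑ j ∈ range N, qint q (m*(j+1)+r) * qWhitney2 q m r N (j+1) * phi q m r (j+1) x := by
      rw [sum_range_succ, qWhitney2_eq_zero q m r N (N+1) (by omega)]
      simp
    rw [hL, hR]
    have : ∑ j ∈ range N, qWhitney2 q m r N (j+1) * qint q (m*(j+1)+r) * phi q m r (j+1) x =
        ∑ j ∈ range N, qint q (m*(j+1)+r) * qWhitney2 q m r N (j+1) * phi q m r (j+1) x :=
      sum_congr rfl fun j _ => by ring
    rw [this]
    ring

lemma coeff_ext (M : ℕ) (c : ℕ → ℝ) (i : ℕ) (hi : i ≤ M)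
    (h : ∀ x : ℝ, x ^ i = ∑ j ∈ range (M+1), c j * x ^ j) :
    ∀ j, j ≤ M → c j = if i = j then 1 else 0 := by
  have hp : (Polynomial.X ^ i : Polynomial ℝ) =
      ∑ j ∈ range (M+1), Polynomial.C (c j) * Polynomial.X ^ j := by
    apply Polynomial.funext
    intro x
    simp [Polynomial.eval_finset_sum, ← h x]
  intro j hj
  have h2 := congrArg (fun p => Polynomial.coeff p j) hp
  simp only [Polynomial.finset_sum_coeff, Polynomial.coeff_C_mul, Polynomial.coeff_X_pow,
    mul_ite, mul_one, mul_zero] at h2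
  rw [Finset.sum_ite_eq (range (M+1)) j c] at h2
  rw [if_pos (Finset.mem_range.mpr (by omega))] at h2
  rw [← h2]
  simp [eq_comm]

lemma key_rev (q : ℝ) (hq : 0 < q) (m : ℕ) (r : ℤ) (w : ℕ → ℕ → ℝ)
    (hw : ∀ (n : ℕ) (x : ℝ), phi q m r n x = ∑ k ∈ range (n + 1), w n k * x ^ k)
    (i j : ℕ) (hj : j ≤ i) :
    ∑ k ∈ Icc j i, qWhitney2 q m r i k * w k j = if i = j then 1 else 0 := by
  set c : ℕ → ℝ := fun j => ∑ k ∈ Icc j i, qWhitney2 q m r i k * w k j with hc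
  have hx : ∀ x : ℝ, x ^ i = ∑ j ∈ range (i+1), c j * x ^ j := by
    intro x
    rw [expand q hq m r i x]
    calc ∑ k ∈ range (i+1), qWhitney2 q m r i k * phi q m r k x
        = ∑ k ∈ range (i+1), ∑ j' ∈ range (k+1), qWhitney2 q m r i k * (w k j' * x^j') := by
          refine sum_congr rfl fun k _ => ?_
          rw [hw k x, mul_sum]
      _ = ∑ j' ∈ range (i+1), ∑ k ∈ Icc j' i, qWhitney2 q m r i k * (w k j' * x^j') := by
          refine Finset.sum_comm' ?_
          intro k j'
          simp only [mem_range, mem_Icc, Nat.lt_succ_iff]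
          omega
      _ = ∑ j' ∈ range (i+1), c j' * x^j' := by
          refine sum_congr rfl fun j' _ => ?_
          rw [hc]
          simp only
          rw [sum_mul]
          exact sum_congr rfl fun k _ => by ring
  exact coeff_ext i c i le_rfl hx j hj

theorem qWhitney_orthogonality_first_second (q : ℝ) (hq : 0 < q) (hq1 : q ≠ 1) (m r : ℕ) (hm : 0 < m) (hr : 0 < r)
    (w : ℕ → ℕ → ℝ)
    (hw : ∀ (n : ℕ) (x : ℝ),
      ∏ i ∈ Finset.range n, (q ^ (-((r : ℤ) + i * m)) * (x - qint q ((r : ℤ) + i * m))) =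
        ∑ k ∈ Finset.range (n + 1), w n k * x ^ k)
    (n j : ℕ) (hjn : j ≤ n) :
    ∑ k ∈ Finset.Icc j n, w n k * qWhitney2 q m (r : ℤ) k j =
      if n = j then (1 : ℝ) else 0 := by
  have hw' : ∀ (N : ℕ) (x : ℝ), phi q m (r:ℤ) N x = ∑ k ∈ range (N + 1), w N k * x ^ k :=
    fun N x => hw N x
  have key := key_rev q hq m (r:ℤ) w hw'
  set A : Matrix (Fin (n+1)) (Fin (n+1)) ℝ :=
    Matrix.of (fun i k => if (k:ℕ) ≤ (i:ℕ) then w i k else 0) with hA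
  set B : Matrix (Fin (n+1)) (Fin (n+1)) ℝ :=
    Matrix.of (fun i k => qWhitney2 q m (r:ℤ) i k) with hB
  have hBA : B * A = 1 := by
    ext i k
    rw [Matrix.mul_apply, Matrix.one_apply]
    have hsum : ∑ l : Fin (n+1), B i l * A l k =
        ∑ l ∈ range (n+1), qWhitney2 q m (r:ℤ) i l * (if (k:ℕ) ≤ l then w l k else 0) := by
      rw [← Fin.sum_univ_eq_sum_range
        (fun l => qWhitney2 q m (r:ℤ) i l * (if (k:ℕ) ≤ l then w l k else 0)) (n+1)]
      rfl
    rw [hsum]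
    by_cases hki : (k:ℕ) ≤ (i:ℕ)
    · have hsub : Icc (k:ℕ) (i:ℕ) ⊆ range (n+1) := by
        intro l hl
        simp only [mem_Icc] at hl
        simp only [mem_range]
        omega
      rw [← Finset.sum_subset hsub (fun l hl hnl => ?_)]
      · rw [Finset.sum_congr rfl (fun l hl => ?_), key i k hki]
        · simp [Fin.ext_iff, eq_comm]
        · simp only [mem_Icc] at hl
          rw [if_pos hl.1]
      · simp only [mem_Icc, not_and_or, not_le] at hnl
        rcases hnl with h | h
        · rw [if_neg (by omega), mul_zero]
        · rw [qWhitney2_eq_zero q m (r:ℤ) i l h, zero_mul]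
    · rw [Finset.sum_eq_zero, if_neg]
      · intro h
        apply hki
        rw [h]
      · intro l hl
        by_cases hlk : (k:ℕ) ≤ l
        · rw [qWhitney2_eq_zero q m (r:ℤ) i l (by omega), zero_mul]
        · rw [if_neg hlk, mul_zero]
  have hAB : A * B = 1 := mul_eq_one_comm.mp hBA
  have hentry := congrFun (congrFun hAB ⟨n, by omega⟩) ⟨j, by omega⟩
  rw [Matrix.mul_apply, Matrix.one_apply] at hentry
  have hsum : ∑ l : Fin (n+1), A ⟨n, by omega⟩ l * B l ⟨j, by omega⟩ =
      ∑ l ∈ range (n+1), (if l ≤ n then w n l else 0) * qWhitney2 q m (r:ℤ) l j := by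
    rw [← Fin.sum_univ_eq_sum_range
      (fun l => (if l ≤ n then w n l else 0) * qWhitney2 q m (r:ℤ) l j) (n+1)]
    rfl
  rw [hsum] at hentry
  have hsub : Icc j n ⊆ range (n+1) := by
    intro l hl
    simp only [mem_Icc] at hl
    simp only [mem_range]
    omega
  rw [← Finset.sum_subset hsub (fun l hl hnl => ?_)] at hentry
  · rw [Finset.sum_congr rfl (fun l hl => ?_)] at hentry
    · rw [hentry]
      simp [Fin.ext_iff]
    · simp only [mem_Icc] at hl
      rw [if_pos hl.2]
  · simp only [mem_range, mem_Icc, not_and_or, not_le, Nat.lt_succ_iff] at hl hnl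
    rcases hnl with h | h
    · rw [qWhitney2_eq_zero q m (r:ℤ) l j (by omega), mul_zero]
    · omega
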